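/- Let α, β be nonzero complex numbers with |α|² + |β|² = 1 and let γ be the unique real root of the cubic z³ + 7z² + 12z − 1. If |β|² < 1/(4+γ), then there exists a complex number a with 0 < |a| < 1 and a ≠ α·conj(β) such that |αβ| − |α|²·(1 − |α|⁴·(1−|a|²)/|1 − conj(a)·α·conj(β)|²)·(1−|αβ|) < 0. (Consequently there exists an S_{α,β}-invariant subspace M, associated with the Blaschke factor θ(z) = (z−a)/(1−conj(a)z), which is not generated by its wandering subspace.) -/

import Mathlib

open scoped ComplexConjugate


private lemma gamma_pos (γ : ℝ) (hγ : γ ^ 3 + 7 * γ ^ 2 + 12 * γ - 1 = 0) : 0 < γ := by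
  by_contra h
  push_neg at h
  rcases le_or_gt γ (-4) with h4 | h4
  · nlinarith [mul_nonneg (mul_nonneg (by linarith : (0:ℝ) ≤ -γ)
      (by linarith : (0:ℝ) ≤ -(γ+3))) (by linarith : (0:ℝ) ≤ -(γ+4))]
  · nlinarith [mul_nonneg (neg_nonneg.2 h) (sq_nonneg (γ + 7/2))]

private lemma cube_gt (γ X : ℝ) (hγ : γ ^ 3 + 7 * γ ^ 2 + 12 * γ - 1 = 0)
    (hγpos : 0 < γ) (hXγ : (3 + γ) / (4 + γ) < X) : 1 < X ^ 3 + X ^ 2 := by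
  have h4γ : (0:ℝ) < 4 + γ := by linarith
  set c := (3 + γ) / (4 + γ) with hcdef
  have hc0 : 0 < c := by positivity
  have hc1 : c ^ 3 + c ^ 2 = 1 := by
    rw [hcdef]
    field_simp
    ring_nf
    nlinarith [hγ]
  have hX0 : 0 < X := lt_trans hc0 hXγ
  nlinarith [mul_pos (sub_pos.mpr hXγ)
    (show (0:ℝ) < X^2 + X*c + c^2 + X + c by nlinarith [mul_pos hX0 hc0, sq_nonneg X, sq_nonneg c])]

private lemma delta_pos (X t : ℝ) (hX : 0 < X) (ht : 0 < t)
    (ht2 : t ^ 2 = X * (1 - X)) (hcube : 1 < X ^ 3 + X ^ 2) :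
    0 < X * (1 - t) - t := by
  have key : (X - t*(1+X)) * (X + t*(1+X)) = X * (X^3 + X^2 - 1) := by
    linear_combination (-(1+X)^2) * ht2
  have hpos2 : 0 < X + t*(1+X) := by positivity
  have h1 : 0 < X * (X^3 + X^2 - 1) := mul_pos hX (by linarith)
  have h2 : 0 < X - t*(1+X) := by
    by_contra hcon
    push_neg at hcon
    nlinarith [mul_nonneg (neg_nonneg.2 hcon) hpos2.le]
  nlinarith [h2]

private lemma t_half (X t : ℝ) (ht : 0 < t) (ht2 : t ^ 2 = X * (1 - X)) : t ≤ 1/2 := by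
  nlinarith [sq_nonneg (X - 1/2)]

private lemma key_real (X t δ s : ℝ) (hX : 0 < X) (hX1 : X < 1) (ht : 0 < t)
    (thalf : t ≤ 1/2) (hδ : 0 < δ) (hδdef : δ = X * (1 - t) - t)
    (hs_pos : 0 < s) (hs1 : s < 1) (hs2 : s ^ 2 = 1 - δ / 4) (hst1 : s * t < 1) :
    t - X * (1 - X ^ 2 * (1 - s ^ 2) / (1 - s * t) ^ 2) * (1 - t) < 0 := by
  have h1s2 : 1 - s ^ 2 = δ / 4 := by rw [hs2]; ring
  rw [h1s2]
  have hd_pos : 0 < (1 - s * t) ^ 2 := pow_pos (by linarith) 2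
  have hd_ge : (1 - t) ^ 2 ≤ (1 - s * t) ^ 2 := by
    nlinarith [mul_nonneg (mul_nonneg (by linarith : (0:ℝ) ≤ 1 - s) ht.le)
      (by linarith : (0:ℝ) ≤ 2 - t - s * t)]
  have hexpand : t - X * (1 - X ^ 2 * (δ / 4) / (1 - s * t) ^ 2) * (1 - t)
      = -δ + X ^ 2 * (δ / 4) / (1 - s * t) ^ 2 * (X * (1 - t)) := by
    rw [hδdef]; field_simp; ring
  rw [hexpand]
  have h2 : X ^ 2 * (δ / 4) / (1 - s * t) ^ 2 * (X * (1 - t)) ≤ δ / 2 := by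
    rw [div_mul_eq_mul_div, div_le_iff₀ hd_pos]
    have hX3 : X ^ 3 ≤ 1 := by nlinarith
    have hB : X ^ 2 * (δ / 4) * (X * (1 - t)) ≤ (1 - t) * (δ / 4) := by
      nlinarith [mul_nonneg (mul_nonneg (sub_nonneg.mpr hX3)
        (by linarith : (0:ℝ) ≤ 1 - t)) hδ.le]
    have hC : (1 - t) * (δ / 4) ≤ (1 - t) ^ 2 * (δ / 2) := by
      nlinarith [mul_nonneg (mul_nonneg hδ.le (by linarith : (0:ℝ) ≤ 1 - 2*t))
        (by linarith : (0:ℝ) ≤ 1 - t)]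
    have hA : (1 - t) ^ 2 * (δ / 2) ≤ (1 - s * t) ^ 2 * (δ / 2) :=
      mul_le_mul_of_nonneg_right hd_ge (by positivity)
    nlinarith [hA, hB, hC]
  linarith


set_option maxHeartbeats 1000000 in
/-- If `|β|² < 1/(4+γ)`, `γ` being the unique real root of `z³ + 7z² + 12z − 1`, then
there exists a Blaschke zero `a` for which the `|r| < 1` condition (failure of the
wandering subspace property) holds. -/
theorem blaschke_wsp_failure_exists (α β : ℂ) (hα : α ≠ 0) (hβ : β ≠ 0)
    (hnorm : ‖α‖ ^ 2 + ‖β‖ ^ 2 = 1)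
    (γ : ℝ) (hγ : γ ^ 3 + 7 * γ ^ 2 + 12 * γ - 1 = 0)
    (hγuniq : ∀ y : ℝ, y ^ 3 + 7 * y ^ 2 + 12 * y - 1 = 0 → y = γ)
    (hβγ : ‖β‖ ^ 2 < 1 / (4 + γ)) :
    ∃ a : ℂ, 0 < ‖a‖ ∧ ‖a‖ < 1 ∧ a ≠ α * conj β ∧
      ‖α * β‖ -
        ‖α‖ ^ 2 *
          (1 - ‖α‖ ^ 4 * (1 - ‖a‖ ^ 2) /
            ‖1 - conj a * (α * conj β)‖ ^ 2) *
          (1 - ‖α * β‖) < 0 := by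
  set X := ‖α‖ ^ 2 with hXdef
  set Y := ‖β‖ ^ 2 with hYdef
  have hX : 0 < X := pow_pos (norm_pos_iff.mpr hα) 2
  have hY : 0 < Y := pow_pos (norm_pos_iff.mpr hβ) 2
  have hX1 : X < 1 := by linarith
  have hγpos : 0 < γ := gamma_pos γ hγ
  have h4γ : (0:ℝ) < 4 + γ := by linarith
  have hXγ : (3 + γ) / (4 + γ) < X := by
    have h1 : Y * (4 + γ) < 1 := by
      have := (lt_div_iff₀ h4γ).mp hβγ
      linarith
    rw [div_lt_iff₀ h4γ]
    nlinarith
  have hcube : 1 < X ^ 3 + X ^ 2 := cube_gt γ X hγ hγpos hXγ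
  set t := ‖α‖ * ‖β‖ with htdef
  have ht : 0 < t := mul_pos (norm_pos_iff.mpr hα) (norm_pos_iff.mpr hβ)
  have ht2 : t ^ 2 = X * (1 - X) := by
    have hYX : Y = 1 - X := by linarith
    have h : t ^ 2 = X * Y := by rw [htdef, hXdef, hYdef]; ring
    rw [h, hYX]
  have thalf : t ≤ 1/2 := t_half X t ht ht2
  set δ := X * (1 - t) - t with hδdef
  have hδ : 0 < δ := delta_pos X t hX ht ht2 hcube
  have hδ1 : δ ≤ 1 := by
    have h0 : X * (1 - t) ≤ X := by nlinarith [ht.le, hX.le]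
    rw [hδdef]; linarith
  set s := Real.sqrt (1 - δ/4) with hsdef
  have hs2 : s ^ 2 = 1 - δ/4 := Real.sq_sqrt (by linarith)
  have hs_pos : 0 < s := Real.sqrt_pos.mpr (by linarith)
  have hs1 : s < 1 := by nlinarith [hs2, hs_pos, hδ]
  have hts : t < s := by nlinarith [hs2, hδ1, thalf, ht, hs_pos]
  have hst1 : s * t < 1 := by nlinarith [hs1, thalf, ht, hs_pos]
  have habs_w : ‖α * conj β‖ = t := by
    rw [norm_mul, Complex.norm_conj, htdef]
  have habs_a : ‖((s/t : ℝ) : ℂ) * (α * conj β)‖ = s := by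
    rw [norm_mul, Complex.norm_real, Real.norm_eq_abs, habs_w, abs_of_pos (by positivity)]
    field_simp
  refine ⟨((s/t : ℝ) : ℂ) * (α * conj β), ?_, ?_, ?_, ?_⟩
  · rw [habs_a]; exact hs_pos
  · rw [habs_a]; exact hs1
  · intro h
    have := congrArg norm h
    rw [habs_a, habs_w] at this
    exact absurd this (ne_of_gt hts)
  · have habsmul : ‖α * β‖ = t := by rw [norm_mul, htdef]
    have hconj : (conj (((s/t : ℝ) : ℂ) * (α * conj β))) * (α * conj β)
        = ((s * t : ℝ) : ℂ) := by
      rw [map_mul]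
      have h1 : conj (α * conj β) * (α * conj β) = (((‖α * conj β‖) ^ 2 : ℝ) : ℂ) := by
        rw [mul_comm, Complex.mul_conj, Complex.sq_norm]
      calc conj ((s/t : ℝ) : ℂ) * conj (α * conj β) * (α * conj β)
          = ((s/t : ℝ) : ℂ) * (conj (α * conj β) * (α * conj β)) := by
            rw [Complex.conj_ofReal]; ring
        _ = ((s/t : ℝ) : ℂ) * (((‖α * conj β‖) ^ 2 : ℝ) : ℂ) := by rw [h1]
        _ = ((s * t : ℝ) : ℂ) := by
            have htne : t ≠ 0 := ne_of_gt ht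
            rw [habs_w, ← Complex.ofReal_mul]
            congr 1
            field_simp
    have hD : ‖1 - conj (((s/t : ℝ) : ℂ) * (α * conj β)) * (α * conj β)‖
        = 1 - s * t := by
      rw [hconj]
      have h2 : (1 : ℂ) - ((s * t : ℝ) : ℂ) = (((1 - s * t : ℝ)) : ℂ) := by push_cast; ring
      rw [h2, Complex.norm_real, Real.norm_eq_abs, abs_of_pos (by linarith)]
    rw [habsmul, habs_a, hD]
    have hX4 : ‖α‖ ^ 4 = X ^ 2 := by rw [hXdef]; ring
    rw [hX4]
    exact key_real X t δ s hX hX1 ht thalf hδ hδdef hs_pos hs1 hs2 hst1
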